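/- Let N, d, k be positive integers with d ≥ 2 and 2k ≤ N, let r = d^k, and let rows : Fin r → (Fin N → Fin d) be an orthogonal array OA(r, N, d, k) of index 1: for every subset T ⊆ Fin N with |T| = k, the map i ↦ (rows i) restricted to T is a bijection onto the set of all functions {i // i ∈ T} → Fin d. Let a : Fin r → ℂ with a_i ≠ 0 for all i and ∑_i |a_i|² = 1, and let ψ : (Fin N → Fin d) → ℂ be the generalized QOA state with ψ(rows i) = a_i for each i and ψ(x) = 0 for x not in the image of rows. Then ψ cannot be UDP by its (N − k)-deck: there exists a unit vector φ : (Fin N → Fin d) → ℂ such that ρ_S(φ) = ρ_S(ψ) for every subset S ⊆ Fin N with |S| = N − k, and yet φ ≠ c • ψ for every scalar c : ℂ. -/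

import Mathlib

open Finset

/-- Combine `x` defined on `S` with `z` defined on the complement of `S`
into a full assignment `Fin N → Fin d`. -/
def joinFun {N d : ℕ} (S : Finset (Fin N))
    (x : {i // i ∈ S} → Fin d) (z : {i // i ∉ S} → Fin d) : Fin N → Fin d :=
  fun i => if h : i ∈ S then x ⟨i, h⟩ else z ⟨i, h⟩

/-- The marginal (reduced density matrix) of the pure state `ψ` on the parties `S`. -/
noncomputable def marginal {N d : ℕ} (S : Finset (Fin N)) (ψ : (Fin N → Fin d) → ℂ)
    (x y : {i // i ∈ S} → Fin d) : ℂ :=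
  ∑ z : {i // i ∉ S} → Fin d,
    ψ (joinFun S x z) * (starRingEnd ℂ) (ψ (joinFun S y z))

/-- `ψ` is a unit vector. -/
def UnitVec {N d : ℕ} (ψ : (Fin N → Fin d) → ℂ) : Prop :=
  ∑ x, ‖ψ x‖ ^ 2 = 1

/-- `ψ` is genuinely multipartite entangled. -/
def GME {N d : ℕ} (ψ : (Fin N → Fin d) → ℂ) : Prop :=
  ∀ J : Finset (Fin N), J.Nonempty → J ≠ Finset.univ →
    ¬ ∃ (α : ({i // i ∈ J} → Fin d) → ℂ) (β : ({i // i ∉ J} → Fin d) → ℂ),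
      ∀ x z, ψ (joinFun J x z) = α x * β z

/-- `ψ` is uniquely determined by the family of marginals `𝓕` among pure states. -/
def UDP {N d : ℕ} (𝓕 : Finset (Finset (Fin N))) (ψ : (Fin N → Fin d) → ℂ) : Prop :=
  ∀ φ : (Fin N → Fin d) → ℂ, UnitVec φ →
    (∀ F ∈ 𝓕, marginal F φ = marginal F ψ) →
    ∃ c : ℂ, ‖c‖ = 1 ∧ φ = c • ψ

/-- `rows` is an orthogonal array `OA(d^k, N, d, k)` of index 1: in any `k` columns,
every `k`-tuple over `Fin d` appears exactly once, i.e. each restriction map is a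
bijection onto the functions on those columns. -/
def IsOrthogonalArrayIndexOne {N d k : ℕ} (rows : Fin (d ^ k) → (Fin N → Fin d)) : Prop :=
  ∀ T : Finset (Fin N), T.card = k →
    Function.Bijective (fun i : Fin (d ^ k) => fun j : {x // x ∈ T} => rows i j.1)

/-- The generalized QOA state built from an orthogonal array
`OA(d^k, N, d, k)` of index 1 with nonzero coefficients cannot be UDP by its
`(N - k)`-deck. -/
theorem generalized_QOA_state_not_UDP (N d k : ℕ)
    (hN : 0 < N) (hd : 2 ≤ d) (hk : 0 < k) (hkN : 2 * k ≤ N)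
    (rows : Fin (d ^ k) → (Fin N → Fin d)) (hOA : IsOrthogonalArrayIndexOne rows)
    (a : Fin (d ^ k) → ℂ) (ha : ∀ i, a i ≠ 0)
    (hnorm : ∑ i, ‖a i‖ ^ 2 = 1)
    (ψ : (Fin N → Fin d) → ℂ)
    (hψrows : ∀ i, ψ (rows i) = a i)
    (hψzero : ∀ x : Fin N → Fin d, (∀ i, x ≠ rows i) → ψ x = 0) :
    ∃ φ : (Fin N → Fin d) → ℂ, UnitVec φ ∧
      (∀ S : Finset (Fin N), S.card = N - k → marginal S φ = marginal S ψ) ∧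
      ∀ c : ℂ, φ ≠ c • ψ := by
  classical
  -- `rows` is injective
  obtain ⟨T0, -, hT0⟩ := Finset.exists_subset_card_eq (s := (Finset.univ : Finset (Fin N))) (n := k)
    (by simpa using (by omega : k ≤ N))
  have hinj : Function.Injective rows := by
    intro i j hij
    exact (hOA T0 hT0).1 (by funext t; simp [hij])
  have hr2 : 2 ≤ d ^ k :=
    le_trans hd (by simpa using Nat.pow_le_pow_right (by omega : 1 ≤ d) hk)
  set i0 : Fin (d ^ k) := ⟨0, by omega⟩ with hi0
  set i1 : Fin (d ^ k) := ⟨1, by omega⟩ with hi1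
  have hi01 : i0 ≠ i1 := by simp [hi0, hi1, Fin.ext_iff]
  set φ : (Fin N → Fin d) → ℂ := fun x => if x = rows i0 then -(a i0) else ψ x with hφdef
  have hφ : ∀ w, φ w = (if w = rows i0 then (-1 : ℂ) else 1) * ψ w := by
    intro w
    by_cases h : w = rows i0
    · simp [hφdef, h, hψrows]
    · simp [hφdef, h]
  have habs : ∀ w, ‖φ w‖ = ‖ψ w‖ := by
    intro w
    rw [hφ]
    by_cases h : w = rows i0 <;> simp [h]
  have hψunit : ∑ x, ‖ψ x‖ ^ 2 = 1 := by
    rw [← Finset.sum_subset (Finset.subset_univ (Finset.univ.image rows))]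
    · rw [Finset.sum_image (fun i _ j _ h => hinj h)]
      simpa [hψrows] using hnorm
    · intro x _ hx
      have : ψ x = 0 := hψzero x (fun i h => hx (Finset.mem_image.mpr ⟨i, by simp, h.symm⟩))
      simp [this]
  refine ⟨φ, ?_, ?_, ?_⟩
  · unfold UnitVec
    rw [← hψunit]
    exact Finset.sum_congr rfl fun x _ => by rw [habs]
  · intro S hS
    have hT : Sᶜ.card = k := by
      have h1 : S.card ≤ N := by simpa using Finset.card_le_univ S
      rw [Finset.card_compl]
      simp only [Fintype.card_fin]
      omega
    have hbij := hOA Sᶜ hT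
    have hkey : ∀ (i i' : Fin (d ^ k)), (∀ j : Fin N, j ∉ S → rows i j = rows i' j) → i = i' := by
      intro i i' h
      apply hbij.1
      funext t
      exact h t.1 (Finset.mem_compl.mp t.2)
    funext x y
    unfold marginal
    apply Finset.sum_congr rfl
    intro z _
    set u := joinFun S x z with hu'
    set v := joinFun S y z with hv'
    by_cases hu : ψ u = 0
    · have hpu : φ u = 0 := by rw [hφ, hu, mul_zero]
      simp [hpu, hu]
    by_cases hv : ψ v = 0
    · have hpv : φ v = 0 := by rw [hφ, hv, mul_zero]
      simp [hpv, hv]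
    obtain ⟨iu, hiu⟩ : ∃ i, u = rows i := by
      by_contra h; push_neg at h; exact hu (hψzero u h)
    obtain ⟨iv, hiv⟩ : ∃ i, v = rows i := by
      by_contra h; push_neg at h; exact hv (hψzero v h)
    have hiuv : iu = iv := by
      apply hkey
      intro j hj
      rw [← hiu, ← hiv]
      simp [hu', hv', joinFun, hj]
    have huv : u = v := by rw [hiu, hiv, hiuv]
    rw [hφ, hφ, huv]
    by_cases h0 : v = rows i0 <;> simp [h0]
  · intro c hc
    have h0 := congrFun hc (rows i0)
    have h1 := congrFun hc (rows i1)
    have hne : rows i1 ≠ rows i0 := fun h => hi01 (hinj h.symm)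
    simp only [hφdef, Pi.smul_apply, smul_eq_mul, if_pos rfl, if_neg hne, hψrows] at h0 h1
    have hc1 : c = 1 := by
      have := mul_right_cancel₀ (ha i1) (h1.symm.trans (one_mul (a i1)).symm)
      exact this
    rw [hc1, one_mul] at h0
    have : a i0 = 0 := by
      have := h0
      linear_combination (-(1:ℂ)/2) * this
    exact ha i0 this
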